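/- Let Y be a discrete random variable and S a finite set of discrete random variables with Y ∉ S, and let E ⊆ S be the set of essential variables for Y. If E is a Markov blanket of Y within S, then E is a Markov boundary of Y within S and it is the unique Markov boundary of Y within S. -/
import Mathlib


open scoped BigOperators

noncomputable section

/-- `p` is a probability mass function on the finite type `Ω`. -/
def IsDist {Ω : Type*} [Fintype Ω] (p : Ω → ℝ) : Prop :=
  (∀ w, 0 ≤ p w) ∧ ∑ w, p w = 1

/-- Total variation distance between two distributions on the same finite type. -/
def tvDist {Ω : Type*} [Fintype Ω] (p q : Ω → ℝ) : ℝ :=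
  (∑ w, |p w - q w|) / 2

variable {ι : Type*} [Fintype ι] [DecidableEq ι]
variable {α : ι → Type*} [∀ i, Fintype (α i)] [∀ i, DecidableEq (α i)]

/-- Marginal probability, under joint pmf `p`, of the event that the variables in the
collection `A` take the values prescribed by the configuration `x`. -/
def margProb (p : (∀ i, α i) → ℝ) (A : Finset ι) (x : ∀ i, α i) : ℝ :=
  ∑ w : ∀ i, α i, if ∀ i ∈ A, w i = x i then p w else 0

/-- Conditional independence of the collections `A` and `B` given the collection `C`:
`f(a, b | c) = f(a | c) f(b | c)` whenever `f(c) > 0` (stated in multiplied-out form). -/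
def CondIndep (p : (∀ i, α i) → ℝ) (A B C : Finset ι) : Prop :=
  ∀ x : ∀ i, α i, 0 < margProb p C x →
    margProb p (A ∪ B ∪ C) x * margProb p C x =
      margProb p (A ∪ C) x * margProb p (B ∪ C) x

/-- `M` is a Markov blanket of the variable `y` within the collection `T`. -/
def MarkovBlanket (p : (∀ i, α i) → ℝ) (y : ι) (T M : Finset ι) : Prop :=
  M ⊆ T ∧ CondIndep p {y} (T \ M) M

/-- `M` is a Markov boundary of `y` within `T`: a Markov blanket no proper subset of
which is a Markov blanket. -/
def MarkovBoundary (p : (∀ i, α i) → ℝ) (y : ι) (T M : Finset ι) : Prop :=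
  MarkovBlanket p y T M ∧ ∀ M' ⊂ M, ¬ MarkovBlanket p y T M'

/-- Mutual information between the collections `A` and `B`
(with the convention `0 · log(junk) = 0` on zero-probability terms). -/
def MI (p : (∀ i, α i) → ℝ) (A B : Finset ι) : ℝ :=
  ∑ w : ∀ i, α i, p w *
    Real.log (margProb p (A ∪ B) w / (margProb p A w * margProb p B w))

/-- Conditional mutual information between collections `A` and `B` given `C`
(with the convention `0 · log(junk) = 0` on zero-probability terms). -/
def CMI (p : (∀ i, α i) → ℝ) (A B C : Finset ι) : ℝ :=
  ∑ w : (∀ i, α i), p w *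
    Real.log ((margProb p (A ∪ B ∪ C) w * margProb p C w) /
      (margProb p (A ∪ C) w * margProb p (B ∪ C) w))


lemma margProb_congr {p : (∀ i, α i) → ℝ} {U : Finset ι} {z x : ∀ i, α i}
    (hz : ∀ i ∈ U, z i = x i) : margProb p U z = margProb p U x := by
  refine Finset.sum_congr rfl fun w _ => ?_
  refine if_congr ?_ rfl rfl
  constructor <;> intro h i hi
  · rw [h i hi, hz i hi]
  · rw [h i hi, hz i hi]

lemma margProb_mono {p : (∀ i, α i) → ℝ} (hp : ∀ w, 0 ≤ p w) {U V : Finset ι}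
    (hUV : U ⊆ V) (x : ∀ i, α i) : margProb p V x ≤ margProb p U x := by
  refine Finset.sum_le_sum fun w _ => ?_
  by_cases h : ∀ i ∈ V, w i = x i
  · rw [if_pos h, if_pos fun i hi => h i (hUV hi)]
  · rw [if_neg h]
    split <;> [exact hp w; exact le_refl 0]

lemma sum_free (p : (∀ i, α i) → ℝ) (F U : Finset ι) (hFU : F ⊆ U) (x : ∀ i, α i) :
    ∑ z : ∀ i, α i, (if ∀ i ∉ F, z i = x i then margProb p U z else 0)
      = margProb p (U \ F) x := by
  classical
  have step1 : ∀ z : ∀ i, α i,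
      (if ∀ i ∉ F, z i = x i then margProb p U z else 0)
      = ∑ w : ∀ i, α i, if ((∀ i ∉ F, z i = x i) ∧ ∀ i ∈ U, w i = z i) then p w else 0 := by
    intro z
    by_cases h : ∀ i ∉ F, z i = x i
    · rw [if_pos h]
      refine Finset.sum_congr rfl fun w _ => if_congr ?_ rfl rfl
      tauto
    · rw [if_neg h]
      symm
      refine Finset.sum_eq_zero fun w _ => if_neg ?_
      tauto
  simp only [step1]
  rw [Finset.sum_comm]
  refine Finset.sum_congr rfl fun w _ => ?_
  set z₀ : ∀ i, α i := fun i => if i ∈ F then w i else x i with hz₀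
  have key : ∀ z : ∀ i, α i,
      (((∀ i ∉ F, z i = x i) ∧ ∀ i ∈ U, w i = z i) ↔ (z = z₀ ∧ ∀ i ∈ U \ F, w i = x i)) := by
    intro z
    constructor
    · rintro ⟨h1, h2⟩
      constructor
      · funext i
        by_cases hiF : i ∈ F
        · rw [hz₀]; simp only [if_pos hiF]; exact (h2 i (hFU hiF)).symm
        · rw [hz₀]; simp only [if_neg hiF]; exact h1 i hiF
      · intro i hi
        rw [Finset.mem_sdiff] at hi
        rw [h2 i hi.1, h1 i hi.2]
    · rintro ⟨rfl, h2⟩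
      constructor
      · intro i hi
        rw [hz₀]; simp only [if_neg hi]
      · intro i hi
        by_cases hiF : i ∈ F
        · rw [hz₀]; simp only [if_pos hiF]
        · rw [hz₀]; simp only [if_neg hiF]
          exact h2 i (Finset.mem_sdiff.mpr ⟨hi, hiF⟩)
  have step2 : ∀ z : ∀ i, α i,
      (if ((∀ i ∉ F, z i = x i) ∧ ∀ i ∈ U, w i = z i) then p w else 0)
      = if z = z₀ then (if ∀ i ∈ U \ F, w i = x i then p w else 0) else 0 := by
    intro z
    by_cases h : z = z₀
    · rw [if_pos h]
      by_cases h2 : ∀ i ∈ U \ F, w i = x i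
      · rw [if_pos ((key z).mpr ⟨h, h2⟩), if_pos h2]
      · rw [if_neg (fun hc => h2 ((key z).mp hc).2), if_neg h2]
    · rw [if_neg h, if_neg (fun hc => h ((key z).mp hc).1)]
  simp only [step2]
  rw [Finset.sum_ite_eq' Finset.univ z₀]
  simp

lemma decomposition (p : (∀ i, α i) → ℝ) {y : ι} {A B C : Finset ι}
    (hyA : y ∉ A) (hAB : Disjoint A B) (hAC : Disjoint A C)
    (h : CondIndep p {y} (A ∪ B) C) : CondIndep p {y} B C := by
  classical
  intro x hC
  have hagree : ∀ z : ∀ i, α i, (∀ i ∉ A, z i = x i) →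
      (∀ i ∈ C, z i = x i) ∧ (∀ i ∈ ({y} ∪ C : Finset ι), z i = x i) := by
    intro z hz
    constructor
    · exact fun i hi => hz i (Finset.disjoint_right.mp hAC hi)
    · intro i hi
      rcases Finset.mem_union.mp hi with hi | hi
      · have hiy : i = y := Finset.mem_singleton.mp hi
        exact hz i (hiy ▸ hyA)
      · exact hz i (Finset.disjoint_right.mp hAC hi)
  have hmain : ∀ z : ∀ i, α i,
      (if ∀ i ∉ A, z i = x i then margProb p ({y} ∪ (A ∪ B) ∪ C) z else 0) * margProb p C x
      = (if ∀ i ∉ A, z i = x i then margProb p ((A ∪ B) ∪ C) z else 0) * margProb p ({y} ∪ C) x := by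
    intro z
    by_cases hz : ∀ i ∉ A, z i = x i
    · rw [if_pos hz, if_pos hz]
      obtain ⟨hzC, hzyC⟩ := hagree z hz
      have hCz : margProb p C z = margProb p C x := margProb_congr hzC
      have hyCz : margProb p ({y} ∪ C) z = margProb p ({y} ∪ C) x := margProb_congr hzyC
      have := h z (hCz ▸ hC)
      rw [hCz, hyCz] at this
      linarith [this]
    · rw [if_neg hz, if_neg hz, zero_mul, zero_mul]
  have hsum := congrArg (fun s => s) (Finset.sum_congr rfl (fun z (_ : z ∈ Finset.univ) => hmain z))
  have hsum2 : (∑ z : ∀ i, α i,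
      (if ∀ i ∉ A, z i = x i then margProb p ({y} ∪ (A ∪ B) ∪ C) z else 0)) * margProb p C x
      = (∑ z : ∀ i, α i,
      (if ∀ i ∉ A, z i = x i then margProb p ((A ∪ B) ∪ C) z else 0)) * margProb p ({y} ∪ C) x := by
    rw [Finset.sum_mul, Finset.sum_mul]
    exact Finset.sum_congr rfl fun z _ => hmain z
  rw [sum_free p A ({y} ∪ (A ∪ B) ∪ C) (by intro i hi; simp [Finset.mem_union, hi]) x,
      sum_free p A ((A ∪ B) ∪ C) (by intro i hi; simp [Finset.mem_union, hi]) x] at hsum2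
  have hset1 : ({y} ∪ (A ∪ B) ∪ C) \ A = {y} ∪ B ∪ C := by
    ext i
    simp only [Finset.mem_sdiff, Finset.mem_union, Finset.mem_singleton]
    constructor
    · rintro ⟨h1, h2⟩; tauto
    · intro h1
      refine ⟨by tauto, ?_⟩
      rcases h1 with (h1 | h1) | h1
      · exact fun hc => hyA (h1 ▸ hc)
      · exact fun hc => (Finset.disjoint_left.mp hAB hc) h1
      · exact fun hc => (Finset.disjoint_left.mp hAC hc) h1
  have hset2 : ((A ∪ B) ∪ C) \ A = B ∪ C := by
    ext i
    simp only [Finset.mem_sdiff, Finset.mem_union]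
    constructor
    · rintro ⟨h1, h2⟩; tauto
    · intro h1
      refine ⟨by tauto, ?_⟩
      rcases h1 with h1 | h1
      · exact fun hc => (Finset.disjoint_left.mp hAB hc) h1
      · exact fun hc => (Finset.disjoint_left.mp hAC hc) h1
  rw [hset1, hset2] at hsum2
  linarith [hsum2]

lemma weak_union (p : (∀ i, α i) → ℝ) (hp : ∀ w, 0 ≤ p w) {y : ι} {A B C : Finset ι}
    (hyA : y ∉ A) (hAB : Disjoint A B) (hAC : Disjoint A C)
    (h : CondIndep p {y} (A ∪ B) C) : CondIndep p {y} A (B ∪ C) := by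
  intro x hBC
  have hC : 0 < margProb p C x :=
    lt_of_lt_of_le hBC (margProb_mono hp Finset.subset_union_right x)
  have hCI := h x hC
  have hdec := decomposition p hyA hAB hAC h x hC
  have hs1 : ({y} : Finset ι) ∪ A ∪ (B ∪ C) = {y} ∪ (A ∪ B) ∪ C := by
    ext i; simp [Finset.mem_union]
  have hs2 : ({y} : Finset ι) ∪ (B ∪ C) = {y} ∪ B ∪ C := by
    ext i; simp [Finset.mem_union]
  have hs3 : A ∪ (B ∪ C) = (A ∪ B) ∪ C := by
    ext i; simp [Finset.mem_union]
  rw [hs1, hs2, hs3]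
  have hCne : margProb p C x ≠ 0 := ne_of_gt hC
  apply mul_left_cancel₀ hCne
  linear_combination margProb p (B ∪ C) x * hCI - margProb p ((A ∪ B) ∪ C) x * hdec


variable [∀ i, Nonempty (α i)]

/-- if the set `E` of essential variables for `Y` is a Markov blanket of
`Y` within `S`, then `E` is a Markov boundary, and it is the unique one. -/
theorem essential_blanket_is_unique_markov_boundary
    (p : (∀ i, α i) → ℝ) (hp : IsDist p)
    (y : ι) (S : Finset ι) (hyS : y ∉ S)
    (E : Finset ι)
    (hE : ∀ W, W ∈ E ↔ W ∈ S ∧ ¬ CondIndep p {y} {W} (S.erase W))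
    (hbl : MarkovBlanket p y S E) :
    MarkovBoundary p y S E ∧ ∀ M, MarkovBoundary p y S M → M = E := by
  have hp0 : ∀ w, 0 ≤ p w := hp.1
  have hsub : ∀ M, MarkovBlanket p y S M → E ⊆ M := by
    intro M hM W hWE
    obtain ⟨hWS, hness⟩ := (hE W).1 hWE
    by_contra hWM
    apply hness
    have hMS := hM.1
    have hWy : W ≠ y := fun h => hyS (h ▸ hWS)
    have hset0 : ({W} : Finset ι) ∪ ((S \ M).erase W) = S \ M := by
      ext i
      simp only [Finset.mem_union, Finset.mem_singleton, Finset.mem_erase, Finset.mem_sdiff]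
      constructor
      · rintro (rfl | ⟨_, h⟩)
        exacts [⟨hWS, hWM⟩, h]
      · intro h
        by_cases hiW : i = W
        · exact Or.inl hiW
        · exact Or.inr ⟨hiW, h⟩
    have hCI : CondIndep p {y} ({W} ∪ (S \ M).erase W) M := by
      rw [hset0]; exact hM.2
    have hwu := weak_union p hp0 (Finset.notMem_singleton.mpr (Ne.symm hWy))
      (Finset.disjoint_singleton_left.mpr (Finset.notMem_erase W _))
      (Finset.disjoint_singleton_left.mpr hWM) hCI
    have hset1 : (S \ M).erase W ∪ M = S.erase W := by
      ext i
      simp only [Finset.mem_union, Finset.mem_erase, Finset.mem_sdiff]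
      constructor
      · rintro (⟨hiW, hiS, hiM⟩ | hiM)
        · exact ⟨hiW, hiS⟩
        · exact ⟨fun h => hWM (h ▸ hiM), hMS hiM⟩
      · rintro ⟨hiW, hiS⟩
        by_cases hiM : i ∈ M
        · exact Or.inr hiM
        · exact Or.inl ⟨hiW, hiS, hiM⟩
    rwa [hset1] at hwu
  refine ⟨⟨hbl, ?_⟩, ?_⟩
  · intro M' hM' hMbl
    exact hM'.ne (Finset.Subset.antisymm hM'.subset (hsub M' hMbl))
  · intro M hM
    have hEM := hsub M hM.1
    by_contra hne
    have hss : E ⊂ M := Finset.ssubset_iff_subset_ne.mpr ⟨hEM, fun h => hne h.symm⟩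
    exact hM.2 E hss hbl


end
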